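/- Let σʲ : H → H (j ∈ ℕ) be continuously Fréchet differentiable maps such that for each n ∈ ℕ there is a sequence (κ_nʲ)_{j∈ℕ} of nonnegative reals with ∑_{j∈ℕ} (κ_nʲ)² < ∞ satisfying ‖σʲ(h₁) − σʲ(h₂)‖ ≤ κ_nʲ‖h₁ − h₂‖ for all h₁, h₂ ∈ H with ‖h₁‖, ‖h₂‖ ≤ n, and ‖σʲ(h)‖ ≤ κ_nʲ for all h ∈ H with ‖h‖ ≤ n. Then: (1) for every h ∈ H the series ∑_{j∈ℕ} ‖Dσʲ(h)(σʲ(h))‖ converges; (2) the mapping H → H, h ↦ ∑_{j∈ℕ} Dσʲ(h)(σʲ(h)), is continuous. -/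

import Mathlib

open Metric Set

private lemma key_bound {H : Type*} [NormedAddCommGroup H] [InnerProductSpace ℝ H]
    (f : H → H) (κ : ℝ) (hκ : 0 ≤ κ) (n : ℕ)
    (hlip : ∀ h₁ h₂ : H, ‖h₁‖ ≤ (n : ℝ) → ‖h₂‖ ≤ (n : ℝ) → ‖f h₁ - f h₂‖ ≤ κ * ‖h₁ - h₂‖)
    (hb : ∀ h : H, ‖h‖ ≤ (n : ℝ) → ‖f h‖ ≤ κ)
    (x : H) (hx : ‖x‖ < n) : ‖fderiv ℝ f x (f x)‖ ≤ κ ^ 2 := by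
  have hlip' : LipschitzOnWith κ.toNNReal f (closedBall (0 : H) n) := by
    rw [lipschitzOnWith_iff_norm_sub_le]
    intro a ha b hb'
    rw [mem_closedBall, dist_zero_right] at ha hb'
    simpa [Real.coe_toNNReal κ hκ] using hlip a b ha hb'
  have hmem : closedBall (0 : H) n ∈ nhds x := by
    refine Filter.mem_of_superset (Metric.ball_mem_nhds x (by linarith : (0:ℝ) < n - ‖x‖)) ?_
    intro y hy
    rw [mem_ball, dist_comm] at hy
    rw [mem_closedBall, dist_zero_right]
    calc ‖y‖ ≤ ‖x‖ + dist x y := by rw [dist_eq_norm]; simpa [norm_sub_rev x y] using norm_add_le x (y - x)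
    _ ≤ (n : ℝ) := by linarith
  have hd : ‖fderiv ℝ f x‖ ≤ κ := by
    have := norm_fderiv_le_of_lipschitzOn ℝ hmem hlip'
    simpa [Real.coe_toNNReal κ hκ] using this
  calc ‖fderiv ℝ f x (f x)‖ ≤ ‖fderiv ℝ f x‖ * ‖f x‖ := (fderiv ℝ f x).le_opNorm _
  _ ≤ κ * κ := by
      exact mul_le_mul hd (hb x hx.le) (norm_nonneg _) hκ
  _ = κ ^ 2 := (sq κ).symm

theorem stmt_1
    {H : Type*} [NormedAddCommGroup H] [InnerProductSpace ℝ H] [CompleteSpace H]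
    [TopologicalSpace.SeparableSpace H]
    (σ : ℕ → H → H)
    (hσC1 : ∀ j : ℕ, ContDiff ℝ 1 (σ j))
    (hσ : ∀ n : ℕ, ∃ κ : ℕ → ℝ, (∀ j, 0 ≤ κ j) ∧ Summable (fun j => κ j ^ 2) ∧
      (∀ j : ℕ, ∀ h₁ h₂ : H, ‖h₁‖ ≤ (n : ℝ) → ‖h₂‖ ≤ (n : ℝ) →
        ‖σ j h₁ - σ j h₂‖ ≤ κ j * ‖h₁ - h₂‖) ∧
      (∀ j : ℕ, ∀ h : H, ‖h‖ ≤ (n : ℝ) → ‖σ j h‖ ≤ κ j)) :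
    (∀ h : H, Summable (fun j : ℕ => ‖fderiv ℝ (σ j) h (σ j h)‖)) ∧
    Continuous (fun h : H => ∑' j : ℕ, fderiv ℝ (σ j) h (σ j h)) := by
  have hn : ∀ x : H, ‖x‖ < (⌈‖x‖⌉₊ + 1 : ℕ) := by
    intro x
    push_cast
    exact lt_of_le_of_lt (Nat.le_ceil _) (by linarith)
  have hsum : ∀ h : H, Summable (fun j : ℕ => ‖fderiv ℝ (σ j) h (σ j h)‖) := by
    intro h
    obtain ⟨κ, hκ0, hκsum, hlip, hb⟩ := hσ (⌈‖h‖⌉₊ + 1)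
    refine Summable.of_nonneg_of_le (fun j => norm_nonneg _)
      (fun j => key_bound (σ j) (κ j) (hκ0 j) _ (hlip j) (hb j) h (hn h)) hκsum
  refine ⟨hsum, ?_⟩
  rw [continuous_iff_continuousAt]
  intro h₀
  set n : ℕ := ⌈‖h₀‖⌉₊ + 1 with hn_def
  obtain ⟨κ, hκ0, hκsum, hlip, hb⟩ := hσ n
  have hcont : ∀ j : ℕ, Continuous (fun h : H => fderiv ℝ (σ j) h (σ j h)) :=
    fun j => ((hσC1 j).continuous_fderiv one_ne_zero).clm_apply (hσC1 j).continuous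
  have htu : TendstoUniformlyOn
      (fun (t : Finset ℕ) (x : H) => ∑ j ∈ t, fderiv ℝ (σ j) x (σ j x))
      (fun x => ∑' j : ℕ, fderiv ℝ (σ j) x (σ j x)) Filter.atTop (ball (0 : H) n) := by
    refine tendstoUniformlyOn_tsum hκsum ?_
    intro j x hx
    rw [mem_ball, dist_zero_right] at hx
    exact key_bound (σ j) (κ j) (hκ0 j) _ (hlip j) (hb j) x hx
  have hco : ContinuousOn (fun x => ∑' j : ℕ, fderiv ℝ (σ j) x (σ j x)) (ball (0 : H) n) := by
    refine htu.continuousOn ?_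
    exact (Filter.Eventually.of_forall fun t =>
      (Continuous.continuousOn (continuous_finset_sum _ fun j _ => hcont j))).frequently
  refine hco.continuousAt (Metric.isOpen_ball.mem_nhds ?_)
  rw [mem_ball, dist_zero_right]
  exact hn h₀
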